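/- Let e_z, e_x, e_y be real numbers such that q_i := (1+e_z+e_x+e_y)/4, q_z := (1+e_z−e_x−e_y)/4, q_x := (1−e_z+e_x−e_y)/4, q_y := (1−e_z−e_x+e_y)/4 are all nonnegative, let A, B ∈ SO(3), and let R = B·diag(e_z,e_x,e_y)·A. Set H := −(q_i log₂ q_i + q_z log₂ q_z + q_x log₂ q_x + q_y log₂ q_y) and K(R) := 1 − H + h₂((1+‖R e₁‖)/2) − h₂((1+R₁₁)/2). Then K(R) = 1 − H if and only if R₂₁ = 0 and R₃₁ = 0 (equivalently, the first column of R is a scalar multiple of the first standard basis vector). -/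
import Mathlib
set_option maxHeartbeats 800000

/-- Binary entropy function (base-2 logarithm), with the convention `0 * log 0 = 0`. -/
noncomputable def h2 (p : ℝ) : ℝ := -(p * Real.logb 2 p) - (1 - p) * Real.logb 2 (1 - p)

/-- `M` is a real 3×3 special orthogonal matrix. -/
def SO3 (M : Matrix (Fin 3) (Fin 3) ℝ) : Prop := M.transpose * M = 1 ∧ M.det = 1

/-- Euclidean norm of the first column of a 3×3 real matrix. -/
noncomputable def colNorm3 (M : Matrix (Fin 3) (Fin 3) ℝ) : ℝ :=
  Real.sqrt ((M 0 0) ^ 2 + (M 1 0) ^ 2 + (M 2 0) ^ 2)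

lemma h2_eq_binEntropy (p : ℝ) : h2 p = Real.binEntropy p / Real.log 2 := by
  unfold h2 Real.binEntropy
  rw [Real.log_inv, Real.log_inv, Real.logb, Real.logb]
  ring

lemma h2_one_sub (p : ℝ) : h2 (1 - p) = h2 p := by
  rw [h2_eq_binEntropy, h2_eq_binEntropy, Real.binEntropy_one_sub]

/-- strict injectivity on [0,1] of t ↦ h2((1+t)/2) -/
lemma h2_inj {a b : ℝ} (ha : 0 ≤ a) (hab : a ≤ b) (hb : b ≤ 1)
    (h : h2 ((1 + b) / 2) = h2 ((1 + a) / 2)) : b = a := by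
  rcases eq_or_lt_of_le hab with h' | h'
  · exact h'.symm
  · exfalso
    have hm : ((1 + a) / 2) ∈ Set.Icc (2⁻¹ : ℝ) 1 := by constructor <;> [linarith; linarith]
    have hm' : ((1 + b) / 2) ∈ Set.Icc (2⁻¹ : ℝ) 1 := by constructor <;> [linarith; linarith]
    have := Real.binEntropy_strictAntiOn hm hm' (by linarith)
    rw [h2_eq_binEntropy, h2_eq_binEntropy] at h
    have hl : Real.log 2 ≠ 0 := by positivity
    have : Real.binEntropy ((1 + b) / 2) = Real.binEntropy ((1 + a) / 2) :=
      by field_simp at h; linarith [h]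
    linarith [Real.binEntropy_strictAntiOn hm hm' (by linarith : (1+a)/2 < (1+b)/2)]

theorem stmt3 (ez ex ey : ℝ)
    (hqi : 0 ≤ (1 + ez + ex + ey) / 4) (hqz : 0 ≤ (1 + ez - ex - ey) / 4)
    (hqx : 0 ≤ (1 - ez + ex - ey) / 4) (hqy : 0 ≤ (1 - ez - ex + ey) / 4)
    (A B : Matrix (Fin 3) (Fin 3) ℝ) (hA : SO3 A) (hB : SO3 B)
    (R : Matrix (Fin 3) (Fin 3) ℝ)
    (hR : R = B * Matrix.diagonal ![ez, ex, ey] * A)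
    (H : ℝ)
    (hH : H = -((1 + ez + ex + ey) / 4 * Real.logb 2 ((1 + ez + ex + ey) / 4)
      + (1 + ez - ex - ey) / 4 * Real.logb 2 ((1 + ez - ex - ey) / 4)
      + (1 - ez + ex - ey) / 4 * Real.logb 2 ((1 - ez + ex - ey) / 4)
      + (1 - ez - ex + ey) / 4 * Real.logb 2 ((1 - ez - ex + ey) / 4))) :
    1 - H + h2 ((1 + colNorm3 R) / 2) - h2 ((1 + R 0 0) / 2) = 1 - H ↔
      (R 1 0 = 0 ∧ R 2 0 = 0) := by
  -- orthogonality relations for B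
  have oB : ∀ i j : Fin 3, B 0 i * B 0 j + B 1 i * B 1 j + B 2 i * B 2 j
      = if i = j then 1 else 0 := by
    intro i j
    have := congrFun (congrFun hB.1 i) j
    simpa [Matrix.mul_apply, Fin.sum_univ_three, Matrix.transpose_apply,
      Matrix.one_apply] using this
  have oA : A 0 0 * A 0 0 + A 1 0 * A 1 0 + A 2 0 * A 2 0 = 1 := by
    have := congrFun (congrFun hA.1 0) 0
    simpa [Matrix.mul_apply, Fin.sum_univ_three, Matrix.transpose_apply,
      Matrix.one_apply] using this
  -- entries of the first column of R
  have hRe : ∀ i : Fin 3, R i 0 =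
      B i 0 * ez * A 0 0 + B i 1 * ex * A 1 0 + B i 2 * ey * A 2 0 := by
    intro i
    rw [hR]
    simp [Matrix.mul_apply, Fin.sum_univ_three, Matrix.diagonal, Matrix.of_apply]
    try ring
  set S : ℝ := (R 0 0) ^ 2 + (R 1 0) ^ 2 + (R 2 0) ^ 2 with hS
  have hSval : S = (ez * A 0 0) ^ 2 + (ex * A 1 0) ^ 2 + (ey * A 2 0) ^ 2 := by
    have h00 : B 0 0 * B 0 0 + B 1 0 * B 1 0 + B 2 0 * B 2 0 = 1 := by simpa using oB 0 0
    have h11 : B 0 1 * B 0 1 + B 1 1 * B 1 1 + B 2 1 * B 2 1 = 1 := by simpa using oB 1 1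
    have h22 : B 0 2 * B 0 2 + B 1 2 * B 1 2 + B 2 2 * B 2 2 = 1 := by simpa using oB 2 2
    have h01 : B 0 0 * B 0 1 + B 1 0 * B 1 1 + B 2 0 * B 2 1 = 0 := by simpa using oB 0 1
    have h02 : B 0 0 * B 0 2 + B 1 0 * B 1 2 + B 2 0 * B 2 2 = 0 := by simpa using oB 0 2
    have h12 : B 0 1 * B 0 2 + B 1 1 * B 1 2 + B 2 1 * B 2 2 = 0 := by simpa using oB 1 2
    rw [hS, hRe 0, hRe 1, hRe 2]
    linear_combination (ez * A 0 0)^2 * h00 + (ex * A 1 0)^2 * h11 + (ey * A 2 0)^2 * h22 +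
      (2 * (ez * A 0 0) * (ex * A 1 0)) * h01 + (2 * (ez * A 0 0) * (ey * A 2 0)) * h02 +
      (2 * (ex * A 1 0) * (ey * A 2 0)) * h12
  -- bounds on e's
  have hez : ez ^ 2 ≤ 1 := by nlinarith
  have hex : ex ^ 2 ≤ 1 := by nlinarith
  have hey : ey ^ 2 ≤ 1 := by nlinarith
  have hS1 : S ≤ 1 := by
    rw [hSval]
    nlinarith [sq_nonneg (A 0 0), sq_nonneg (A 1 0), sq_nonneg (A 2 0), oA]
  have hSge : (R 0 0) ^ 2 ≤ S := by nlinarith [sq_nonneg (R 1 0), sq_nonneg (R 2 0)]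
  have hcol : colNorm3 R = Real.sqrt S := rfl
  have hn1 : Real.sqrt S ≤ 1 := by
    rw [show (1:ℝ) = Real.sqrt 1 from (Real.sqrt_one).symm]
    exact Real.sqrt_le_sqrt hS1
  have habs : |R 0 0| ≤ Real.sqrt S := by
    rw [← Real.sqrt_sq_eq_abs]; exact Real.sqrt_le_sqrt hSge
  have hsym : h2 ((1 + R 0 0) / 2) = h2 ((1 + |R 0 0|) / 2) := by
    rcases abs_cases (R 0 0) with ⟨h, _⟩ | ⟨h, _⟩
    · rw [h]
    · rw [h, ← h2_one_sub ((1 + - R 0 0) / 2)]; ring_nf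
  constructor
  · intro h
    have h' : h2 ((1 + colNorm3 R) / 2) = h2 ((1 + R 0 0) / 2) := by linarith
    rw [hcol, hsym] at h'
    have := h2_inj (abs_nonneg _) habs hn1 h'
    have hsq : S = (R 0 0) ^ 2 := by
      have h2' : Real.sqrt S ^ 2 = |R 0 0| ^ 2 := by rw [this]
      rwa [Real.sq_sqrt (by nlinarith [sq_nonneg (R 0 0)] : (0:ℝ) ≤ S), sq_abs] at h2'
    constructor <;> nlinarith [sq_nonneg (R 1 0), sq_nonneg (R 2 0)]
  · rintro ⟨h1, h2⟩
    have : colNorm3 R = |R 0 0| := by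
      rw [hcol, hS, h1, h2]
      simp [Real.sqrt_sq_eq_abs]
    rw [this, ← hsym]
    ring
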